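/- arXiv:2510.17740 — 3 statements merged into one kernel-verified Lean document; each statement's English description precedes it below -/
import Mathlib

section
/- Let v₁ ≠ v₂ ∈ ℝⁿ be unit vectors with 1 − (v₁ᵀ v₂)² ≤ c·λ for some λ ∈ (0,1] and c ≥ 1. Define Mᵢ = I − (1 − λ)·vᵢ vᵢᵀ for i ∈ {1,2}. Then (1/(3c))·M₁ ⪯ M₂ ⪯ 3c·M₁ in the Loewner order. -/
open Matrix

lemma dot_cs {n : ℕ} (u w : Fin n → ℝ) : (u ⬝ᵥ w)^2 ≤ (u ⬝ᵥ u) * (w ⬝ᵥ w) := by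
  simpa [dotProduct, sq] using Finset.sum_mul_sq_le_sq_mul_sq Finset.univ u w

lemma vmv_mulVec {n : ℕ} (v x : Fin n → ℝ) : vecMulVec v v *ᵥ x = (v ⬝ᵥ x) • v := by
  ext i
  simp only [mulVec, dotProduct, vecMulVec_apply, Pi.smul_apply, smul_eq_mul]
  rw [Finset.sum_mul]
  exact Finset.sum_congr rfl fun j _ => by ring

lemma quad_form {n : ℕ} (lam : ℝ) (v x : Fin n → ℝ) :
    x ⬝ᵥ ((1 - (1-lam) • vecMulVec v v) *ᵥ x) = x ⬝ᵥ x - (1-lam) * (v ⬝ᵥ x)^2 := by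
  rw [sub_mulVec, one_mulVec, smul_mulVec, vmv_mulVec, dotProduct_sub]
  simp only [dotProduct_smul, smul_eq_mul]
  rw [dotProduct_comm x v]
  ring

lemma herm_M {n : ℕ} (lam : ℝ) (v : Fin n → ℝ) :
    (1 - (1-lam) • vecMulVec v v : Matrix (Fin n) (Fin n) ℝ).IsHermitian := by
  show _ᴴ = _
  ext i j
  simp [conjTranspose_apply, vecMulVec_apply, one_apply, eq_comm, mul_comm]

lemma herm_smul {n : ℕ} (r : ℝ) {A : Matrix (Fin n) (Fin n) ℝ} (h : A.IsHermitian) :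
    (r • A).IsHermitian := by
  show _ᴴ = _
  rw [conjTranspose_smul, h.eq]
  simp

lemma key (lam c t a b N : ℝ) (hlam0 : 0 < lam) (hlam1 : lam ≤ 1) (hc : 1 ≤ c)
    (ht : t^2 ≤ 1) (hs : 1 - t^2 ≤ c*lam) (haN : a^2 ≤ N)
    (hCS : (b - t*a)^2 ≤ (1 - t^2) * (N - a^2)) :
    N - (1-lam)*b^2 ≤ 3*c*(N - (1-lam)*a^2) := by
  have hP : 0 ≤ N - a^2 := by linarith
  have hcl : 0 < c*lam := by positivity
  have hD : (b - t*a)^2 ≤ c*lam*(N - a^2) := hCS.trans (by nlinarith)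
  have hfac : (0:ℝ) ≤ 1 - ((1-lam)*t)^2 := by
    nlinarith [mul_nonneg (mul_nonneg hlam0.le (by linarith : (0:ℝ) ≤ 2 - lam)) (sq_nonneg t)]
  have key0 : 0 ≤ c*lam*((1-lam)*(2*t*a*(b - t*a)) + c*lam*a^2 + (N - a^2)) := by
    nlinarith [sq_nonneg (c*lam*a + (1-lam)*t*(b - t*a)), hD,
      mul_nonneg hfac (sq_nonneg (b - t*a))]
  have h2' : -(c*lam*a^2 + (N - a^2)) ≤ (1-lam)*(2*t*a*(b - t*a)) := by
    have := (mul_nonneg_iff_of_pos_left hcl).mp key0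
    linarith
  have hb : b^2 = t^2*a^2 + 2*t*a*(b - t*a) + (b - t*a)^2 := by ring
  nlinarith [h2', hb, mul_nonneg (by linarith : (0:ℝ) ≤ 1 - lam) (sq_nonneg (b - t*a)),
    mul_le_mul_of_nonneg_right hs (sq_nonneg a),
    mul_nonneg (mul_nonneg hlam0.le (by linarith : (0:ℝ) ≤ 1 - t^2)) (sq_nonneg a),
    mul_nonneg (mul_nonneg hlam0.le (by linarith : (0:ℝ) ≤ c - 1)) (sq_nonneg a),
    mul_le_mul_of_nonneg_left haN (by linarith : (0:ℝ) ≤ 3*c - 2)]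

/-- If `v₁ ≠ v₂` are unit vectors with `1 - ⟨v₁,v₂⟩² ≤ c·λ` for
`λ ∈ (0,1]` and `c ≥ 1`, and `Mᵢ = I - (1-λ)·vᵢvᵢᵀ`, then
`(1/(3c))·M₁ ⪯ M₂ ⪯ 3c·M₁` in the Loewner order. -/
theorem stmt_3 {n : ℕ} (v₁ v₂ : Fin n → ℝ) (hne : v₁ ≠ v₂)
    (hv₁ : v₁ ⬝ᵥ v₁ = 1) (hv₂ : v₂ ⬝ᵥ v₂ = 1)
    (lam c : ℝ) (hlam0 : 0 < lam) (hlam1 : lam ≤ 1) (hc : 1 ≤ c)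
    (hclose : 1 - (v₁ ⬝ᵥ v₂) ^ 2 ≤ c * lam)
    (M₁ M₂ : Matrix (Fin n) (Fin n) ℝ)
    (hM₁ : M₁ = 1 - (1 - lam) • vecMulVec v₁ v₁)
    (hM₂ : M₂ = 1 - (1 - lam) • vecMulVec v₂ v₂) :
    (M₂ - (3 * c)⁻¹ • M₁).PosSemidef ∧ ((3 * c) • M₁ - M₂).PosSemidef := by
  have hcpos : (0:ℝ) < 3*c := by linarith
  have ht : (v₁ ⬝ᵥ v₂)^2 ≤ 1 := by
    have h := dot_cs v₁ v₂
    rw [hv₁, hv₂] at h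
    simpa using h
  have main : ∀ x : Fin n → ℝ,
      (x ⬝ᵥ x - (1-lam)*(v₂ ⬝ᵥ x)^2 ≤ 3*c*(x ⬝ᵥ x - (1-lam)*(v₁ ⬝ᵥ x)^2))
      ∧ (x ⬝ᵥ x - (1-lam)*(v₁ ⬝ᵥ x)^2 ≤ 3*c*(x ⬝ᵥ x - (1-lam)*(v₂ ⬝ᵥ x)^2)) := by
    intro x
    have haN : (v₁ ⬝ᵥ x)^2 ≤ x ⬝ᵥ x := by
      have h := dot_cs v₁ x; rw [hv₁] at h; simpa using h
    have hbN : (v₂ ⬝ᵥ x)^2 ≤ x ⬝ᵥ x := by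
      have h := dot_cs v₂ x; rw [hv₂] at h; simpa using h
    have hCS1 : ((v₂ ⬝ᵥ x) - (v₁ ⬝ᵥ v₂)*(v₁ ⬝ᵥ x))^2
        ≤ (1 - (v₁ ⬝ᵥ v₂)^2) * ((x ⬝ᵥ x) - (v₁ ⬝ᵥ x)^2) := by
      have h := dot_cs (v₂ - (v₁ ⬝ᵥ v₂) • v₁) (x - (v₁ ⬝ᵥ x) • v₁)
      simp only [dotProduct_sub, sub_dotProduct, smul_dotProduct, dotProduct_smul,
        smul_eq_mul, hv₁, hv₂, dotProduct_comm v₂ v₁, dotProduct_comm x v₁,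
        dotProduct_comm x v₂] at h
      nlinarith [h]
    have hCS2 : ((v₁ ⬝ᵥ x) - (v₁ ⬝ᵥ v₂)*(v₂ ⬝ᵥ x))^2
        ≤ (1 - (v₁ ⬝ᵥ v₂)^2) * ((x ⬝ᵥ x) - (v₂ ⬝ᵥ x)^2) := by
      have h := dot_cs (v₁ - (v₁ ⬝ᵥ v₂) • v₂) (x - (v₂ ⬝ᵥ x) • v₂)
      simp only [dotProduct_sub, sub_dotProduct, smul_dotProduct, dotProduct_smul,
        smul_eq_mul, hv₁, hv₂, dotProduct_comm v₂ v₁, dotProduct_comm x v₁,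
        dotProduct_comm x v₂] at h
      nlinarith [h]
    exact ⟨key lam c _ _ _ _ hlam0 hlam1 hc ht hclose haN hCS1,
      key lam c _ _ _ _ hlam0 hlam1 hc ht hclose hbN hCS2⟩
  constructor
  · refine PosSemidef.of_dotProduct_mulVec_nonneg ?_ ?_
    · rw [hM₂, hM₁]
      exact (herm_M lam v₂).sub (herm_smul _ (herm_M lam v₁))
    · intro x
      have h := (main x).2
      rw [star_trivial, hM₂, hM₁, sub_mulVec, smul_mulVec, dotProduct_sub,
        dotProduct_smul, quad_form, quad_form, smul_eq_mul]
      have h2 := mul_le_mul_of_nonneg_left h (le_of_lt (inv_pos.mpr hcpos))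
      rw [← mul_assoc, inv_mul_cancel₀ hcpos.ne', one_mul] at h2
      linarith
  · refine PosSemidef.of_dotProduct_mulVec_nonneg ?_ ?_
    · rw [hM₂, hM₁]
      exact (herm_smul _ (herm_M lam v₁)).sub (herm_M lam v₂)
    · intro x
      have h := (main x).1
      rw [star_trivial, hM₂, hM₁, sub_mulVec, smul_mulVec, dotProduct_sub,
        dotProduct_smul, quad_form, quad_form, smul_eq_mul]
      linarith
end

section
/- Let G = (V,E,η) be a β-balanced lossy flow graph with β ≤ 1 (each η_e ∈ [1, 1+β]) and let Ḡ be its smoothed graph. Let N_G = D_G^{−1/2} L_G D_G^{−1/2} and N_Ḡ = D_Ḡ^{−1/2} L_Ḡ D_Ḡ^{−1/2} be the normalized Laplacians, where L_G = B_GᵀB_G, L_Ḡ = B_ḠᵀB_Ḡ and D_G, D_Ḡ their diagonals (assumed positive). Then ‖N_G − N_Ḡ‖₂ ≤ 10β, where ‖·‖₂ is the spectral norm. -/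
open Matrix

set_option maxHeartbeats 1000000

private lemma norm_clm_le {V : Type*} [Fintype V] [DecidableEq V] (M : Matrix V V ℝ) (c : ℝ)
    (hc : 0 ≤ c) (h : ∀ x : V → ℝ, ∑ v, (M.mulVec x v)^2 ≤ c^2 * ∑ v, (x v)^2) :
    ‖Matrix.toEuclideanCLM (𝕜 := ℝ) M‖ ≤ c := by
  refine ContinuousLinearMap.opNorm_le_bound _ hc fun y => ?_
  rw [EuclideanSpace.norm_eq, EuclideanSpace.norm_eq]
  have happ : ∀ i, (Matrix.toEuclideanCLM (𝕜 := ℝ) M y) i = M.mulVec (fun j => y j) i :=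
    fun i => rfl
  simp only [happ, Real.norm_eq_abs, sq_abs]
  calc Real.sqrt (∑ i, (M.mulVec (fun j => y j) i)^2)
      ≤ Real.sqrt (c^2 * ∑ i, (y i)^2) := Real.sqrt_le_sqrt (h _)
    _ = c * Real.sqrt (∑ i, (y i)^2) := by
        rw [Real.sqrt_mul (sq_nonneg c), Real.sqrt_sq hc]

private lemma key_sq {E V : Type*} [Fintype V] [Fintype E] (P Q : Matrix E V ℝ) (p q : ℝ)
    (hP : ∀ x : V → ℝ, ∑ e, (P.mulVec x e)^2 ≤ p^2 * ∑ v, (x v)^2)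
    (hQ : ∀ x : V → ℝ, ∑ e, (Q.mulVec x e)^2 ≤ q^2 * ∑ v, (x v)^2) :
    ∀ x : V → ℝ, ∑ v, ((Pᵀ * Q).mulVec x v)^2 ≤ (p*q)^2 * ∑ v, (x v)^2 := by
  intro x
  set z : V → ℝ := (Pᵀ * Q).mulVec x with hz
  set s : ℝ := ∑ v, (z v)^2 with hs
  have hs0 : 0 ≤ s := Finset.sum_nonneg fun _ _ => sq_nonneg _
  have hX0 : (0:ℝ) ≤ ∑ v, (x v)^2 := Finset.sum_nonneg fun _ _ => sq_nonneg _
  have hdot : s = (P.mulVec z) ⬝ᵥ (Q.mulVec x) := by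
    have h1 : s = z ⬝ᵥ ((Pᵀ * Q).mulVec x) := by
      simp [dotProduct, hs, sq, hz]
    rw [h1, ← Matrix.mulVec_mulVec, Matrix.dotProduct_mulVec, Matrix.vecMul_transpose]
  have hcs : s^2 ≤ (∑ e, (P.mulVec z e)^2) * (∑ e, (Q.mulVec x e)^2) := by
    rw [hdot]
    exact Finset.sum_mul_sq_le_sq_mul_sq _ _ _
  have h1 := hP z
  have h2 := hQ x
  have hQx0 : (0:ℝ) ≤ ∑ e, (Q.mulVec x e)^2 := Finset.sum_nonneg fun _ _ => sq_nonneg _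
  rcases eq_or_lt_of_le hs0 with h | h
  · rw [← h]; positivity
  · have hq2X : (0:ℝ) ≤ q^2 * ∑ v, (x v)^2 := le_trans hQx0 h2
    have key : s^2 ≤ (p*q)^2 * (∑ v, (x v)^2) * s := by
      calc s^2 ≤ (∑ e, (P.mulVec z e)^2) * (∑ e, (Q.mulVec x e)^2) := hcs
        _ ≤ (p^2 * s) * (q^2 * ∑ v, (x v)^2) := mul_le_mul h1 h2 hQx0 (mul_nonneg (sq_nonneg p) hs0)
        _ = (p*q)^2 * (∑ v, (x v)^2) * s := by ring
    nlinarith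

private lemma swap_sum {E V : Type*} [Fintype V] [Fintype E] [DecidableEq V]
    (c : E → V) (w : E → ℝ) (f : V → ℝ) :
    ∑ e, w e * f (c e) = ∑ v, (∑ e, w e * (if v = c e then (1:ℝ) else 0)) * f v := by
  have h : ∀ v, (∑ e, w e * (if v = c e then (1:ℝ) else 0)) * f v
      = ∑ e, (if v = c e then w e * f v else 0) := by
    intro v
    rw [Finset.sum_mul]
    congr 1; ext e
    by_cases h : v = c e <;> simp [h]
  simp only [h]
  rw [Finset.sum_comm]
  congr 1; ext e
  simp

private lemma norm_clm_mul_le {V : Type*} [Fintype V] [DecidableEq V] (X Y : Matrix V V ℝ) :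
    ‖Matrix.toEuclideanCLM (𝕜 := ℝ) (X * Y)‖
      ≤ ‖Matrix.toEuclideanCLM (𝕜 := ℝ) X‖ * ‖Matrix.toEuclideanCLM (𝕜 := ℝ) Y‖ := by
  rw [_root_.map_mul]
  exact norm_mul_le _ _

private lemma norm_clm_add_le {V : Type*} [Fintype V] [DecidableEq V] (X Y : Matrix V V ℝ) :
    ‖Matrix.toEuclideanCLM (𝕜 := ℝ) (X + Y)‖
      ≤ ‖Matrix.toEuclideanCLM (𝕜 := ℝ) X‖ + ‖Matrix.toEuclideanCLM (𝕜 := ℝ) Y‖ := by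
  rw [map_add]
  exact norm_add_le _ _

/-- For a `β`-balanced lossy flow graph `G` (with `0 ≤ β ≤ 1`) with no
isolated vertices, the normalized lossy Laplacian `N_G = D_G^{-1/2} L_G D_G^{-1/2}` and the
normalized Laplacian `N_Ḡ` of the smoothed graph satisfy `‖N_G - N_Ḡ‖₂ ≤ 10β` in the
spectral (ℓ₂ operator) norm. -/
theorem stmt_6 {V E : Type*} [Fintype V] [Fintype E] [DecidableEq V]
    (a b : E → V) (hab : ∀ e, a e ≠ b e)
    (β : ℝ) (hβ0 : 0 ≤ β) (hβ1 : β ≤ 1)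
    (η : E → ℝ) (hη : ∀ e, 1 ≤ η e ∧ η e ≤ 1 + β)
    (BG BS : Matrix E V ℝ)
    (hBG : ∀ e v, BG e v = (if v = b e then 1 else 0) - η e * (if v = a e then 1 else 0))
    (hBS : ∀ e v, BS e v = (if v = b e then 1 else 0) - (if v = a e then 1 else 0))
    (LG LS : Matrix V V ℝ) (hLG : LG = BGᵀ * BG) (hLS : LS = BSᵀ * BS)
    (hdGpos : ∀ v, 0 < LG v v) (hdSpos : ∀ v, 0 < LS v v)
    (NG NS : Matrix V V ℝ)
    (hNG : ∀ u v, NG u v = LG u v / (Real.sqrt (LG u u) * Real.sqrt (LG v v)))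
    (hNS : ∀ u v, NS u v = LS u v / (Real.sqrt (LS u u) * Real.sqrt (LS v v))) :
    ‖Matrix.toEuclideanCLM (𝕜 := ℝ) (NG - NS)‖ ≤ 10 * β := by
  classical
  -- abbreviations
  set Dg : Matrix V V ℝ := Matrix.diagonal (fun v => (Real.sqrt (LG v v))⁻¹) with hDg
  set Ds : Matrix V V ℝ := Matrix.diagonal (fun v => (Real.sqrt (LS v v))⁻¹) with hDs
  set C : Matrix V V ℝ :=
    Matrix.diagonal (fun v => Real.sqrt (LS v v) * (Real.sqrt (LG v v))⁻¹) with hCdef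
  set A : Matrix E V ℝ := BG * Dg with hA
  set F : Matrix E V ℝ := BS * Dg with hF
  set S : Matrix E V ℝ := BS * Ds with hSdef
  set E1 : Matrix E V ℝ := A - F with hE1
  have sqrtg_pos : ∀ v, 0 < Real.sqrt (LG v v) := fun v => Real.sqrt_pos.2 (hdGpos v)
  have sqrtd_pos : ∀ v, 0 < Real.sqrt (LS v v) := fun v => Real.sqrt_pos.2 (hdSpos v)
  -- mulVec formulas
  have hBGmv : ∀ (y : V → ℝ) e, BG.mulVec y e = y (b e) - η e * y (a e) := by
    intro y e
    simp only [Matrix.mulVec, dotProduct, hBG, sub_mul, mul_assoc, ite_mul, one_mul, zero_mul,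
      Finset.sum_sub_distrib, Finset.sum_ite_eq', Finset.mem_univ, if_true, ← Finset.mul_sum]
  have hBSmv : ∀ (y : V → ℝ) e, BS.mulVec y e = y (b e) - y (a e) := by
    intro y e
    simp only [Matrix.mulVec, dotProduct, hBS, sub_mul, ite_mul, one_mul, zero_mul,
      Finset.sum_sub_distrib, Finset.sum_ite_eq', Finset.mem_univ, if_true]
  have hDgmv : ∀ (x : V → ℝ), Dg.mulVec x = fun v => (Real.sqrt (LG v v))⁻¹ * x v := by
    intro x; funext v; rw [hDg, Matrix.mulVec_diagonal]
  have hDsmv : ∀ (x : V → ℝ), Ds.mulVec x = fun v => (Real.sqrt (LS v v))⁻¹ * x v := by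
    intro x; funext v; rw [hDs, Matrix.mulVec_diagonal]
  have hAmv : ∀ (x : V → ℝ) e, A.mulVec x e =
      (Real.sqrt (LG (b e) (b e)))⁻¹ * x (b e)
        - η e * ((Real.sqrt (LG (a e) (a e)))⁻¹ * x (a e)) := by
    intro x e
    rw [hA, ← Matrix.mulVec_mulVec, hDgmv, hBGmv]
  have hFmv : ∀ (x : V → ℝ) e, F.mulVec x e =
      (Real.sqrt (LG (b e) (b e)))⁻¹ * x (b e) - (Real.sqrt (LG (a e) (a e)))⁻¹ * x (a e) := by
    intro x e
    rw [hF, ← Matrix.mulVec_mulVec, hDgmv, hBSmv]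
  have hSmv : ∀ (x : V → ℝ) e, S.mulVec x e =
      (Real.sqrt (LS (b e) (b e)))⁻¹ * x (b e) - (Real.sqrt (LS (a e) (a e)))⁻¹ * x (a e) := by
    intro x e
    rw [hSdef, ← Matrix.mulVec_mulVec, hDsmv, hBSmv]
  have hE1mv : ∀ (x : V → ℝ) e, E1.mulVec x e =
      (1 - η e) * ((Real.sqrt (LG (a e) (a e)))⁻¹ * x (a e)) := by
    intro x e
    rw [hE1, Matrix.sub_mulVec]
    simp only [Pi.sub_apply, hAmv, hFmv]
    ring
  -- diagonal entry formulas
  have hgdeg : ∀ v, LG v v = (∑ e, (if v = b e then (1:ℝ) else 0))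
      + ∑ e, η e^2 * (if v = a e then (1:ℝ) else 0) := by
    intro v
    rw [hLG, Matrix.mul_apply, ← Finset.sum_add_distrib]
    congr 1; ext e
    have hne := hab e
    rw [Matrix.transpose_apply, hBG]
    by_cases h1 : v = b e <;> by_cases h2 : v = a e
    · exact absurd (h2.symm.trans h1) hne
    · simp only [h1, h2, if_true, if_false, if_pos rfl, mul_zero]
      rw [if_neg (Ne.symm hne)]
      ring
    · simp only [h1, h2, if_true, if_false, if_pos rfl, mul_one]
      rw [if_neg hne]
      ring
    · simp [h1, h2]
  have hddeg : ∀ v, LS v v = (∑ e, (if v = b e then (1:ℝ) else 0))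
      + ∑ e, (if v = a e then (1:ℝ) else 0) := by
    intro v
    rw [hLS, Matrix.mul_apply, ← Finset.sum_add_distrib]
    congr 1; ext e
    have hne := hab e
    rw [Matrix.transpose_apply, hBS]
    by_cases h1 : v = b e <;> by_cases h2 : v = a e
    · exact absurd (h2.symm.trans h1) hne
    · simp only [h1, h2, if_true, if_false, if_pos rfl]
      rw [if_neg (Ne.symm hne)]
      ring
    · simp only [h1, h2, if_true, if_false, if_pos rfl]
      rw [if_neg hne]
      ring
    · simp [h1, h2]
  -- basic comparisons
  have hQ_le_g : ∀ v, (∑ e, (if v = a e then (1:ℝ) else 0)) ≤ LG v v := by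
    intro v
    rw [hgdeg v]
    have h1 : (∑ e, (if v = a e then (1:ℝ) else 0)) ≤ ∑ e, η e^2 * (if v = a e then (1:ℝ) else 0) := by
      refine Finset.sum_le_sum fun e _ => ?_
      by_cases h : v = a e
      · simp only [if_pos h, mul_one]
        nlinarith [(hη e).1]
      · simp only [if_neg h, mul_zero]
        exact le_rfl
    have h2 : (0:ℝ) ≤ ∑ e, (if v = b e then (1:ℝ) else 0) :=
      Finset.sum_nonneg fun e _ => by positivity
    linarith
  have hd_le_g : ∀ v, LS v v ≤ LG v v := by
    intro v
    rw [hgdeg v, hddeg v]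
    have h1 : (∑ e, (if v = a e then (1:ℝ) else 0)) ≤ ∑ e, η e^2 * (if v = a e then (1:ℝ) else 0) := by
      refine Finset.sum_le_sum fun e _ => ?_
      by_cases h : v = a e
      · simp only [if_pos h, mul_one]
        nlinarith [(hη e).1]
      · simp only [if_neg h, mul_zero]
        exact le_rfl
    linarith
  have hg_le : ∀ v, LG v v ≤ (1+β)^2 * LS v v := by
    intro v
    rw [hgdeg v, hddeg v]
    have h1 : (∑ e, η e^2 * (if v = a e then (1:ℝ) else 0))
        ≤ (1+β)^2 * ∑ e, (if v = a e then (1:ℝ) else 0) := by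
      rw [Finset.mul_sum]
      refine Finset.sum_le_sum fun e _ => ?_
      by_cases h : v = a e
      · simp only [if_pos h, mul_one]
        nlinarith [(hη e).1, (hη e).2]
      · simp only [if_neg h, mul_zero]
        exact le_rfl
    have h2 : (∑ e, (if v = b e then (1:ℝ) else 0))
        ≤ (1+β)^2 * ∑ e, (if v = b e then (1:ℝ) else 0) := by
      have h3 : (0:ℝ) ≤ ∑ e, (if v = b e then (1:ℝ) else 0) :=
        Finset.sum_nonneg fun e _ => by positivity
      nlinarith [mul_nonneg hβ0 h3, mul_nonneg hβ0 (mul_nonneg hβ0 h3)]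
    linarith [mul_add ((1+β)^2) (∑ e, (if v = b e then (1:ℝ) else 0))
      (∑ e, (if v = a e then (1:ℝ) else 0))]
  -- per-vertex normalization identities
  have hxg : ∀ (x : V → ℝ) v, (LG v v) * ((Real.sqrt (LG v v))⁻¹ * x v)^2 = (x v)^2 := by
    intro x v
    rw [mul_pow, inv_pow, Real.sq_sqrt (hdGpos v).le, ← mul_assoc,
      mul_inv_cancel₀ (hdGpos v).ne', one_mul]
  have hxd : ∀ (x : V → ℝ) v, (LS v v) * ((Real.sqrt (LS v v))⁻¹ * x v)^2 = (x v)^2 := by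
    intro x v
    rw [mul_pow, inv_pow, Real.sq_sqrt (hdSpos v).le, ← mul_assoc,
      mul_inv_cancel₀ (hdSpos v).ne', one_mul]
  -- quadratic form bounds
  have qA : ∀ x : V → ℝ, ∑ e, (A.mulVec x e)^2 ≤ 2 * ∑ v, (x v)^2 := by
    intro x
    set f : V → ℝ := fun v => ((Real.sqrt (LG v v))⁻¹ * x v)^2 with hfdef
    have hf0 : ∀ v, 0 ≤ f v := fun v => sq_nonneg _
    have step1 : ∑ e, (A.mulVec x e)^2 ≤ ∑ e, (2 * f (b e) + 2 * (η e^2 * f (a e))) := by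
      refine Finset.sum_le_sum fun e _ => ?_
      rw [hAmv x e]
      simp only [hfdef]
      nlinarith [sq_nonneg ((Real.sqrt (LG (b e) (b e)))⁻¹ * x (b e)
        + η e * ((Real.sqrt (LG (a e) (a e)))⁻¹ * x (a e)))]
    have hswb : ∑ e, f (b e) = ∑ v, (∑ e, (if v = b e then (1:ℝ) else 0)) * f v := by
      simpa using swap_sum b (fun _ => (1:ℝ)) f
    have hswa : ∑ e, η e^2 * f (a e)
        = ∑ v, (∑ e, η e^2 * (if v = a e then (1:ℝ) else 0)) * f v := swap_sum a _ f
    calc ∑ e, (A.mulVec x e)^2 ≤ ∑ e, (2 * f (b e) + 2 * (η e^2 * f (a e))) := step1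
      _ = 2 * (∑ e, f (b e)) + 2 * (∑ e, η e^2 * f (a e)) := by
          rw [Finset.sum_add_distrib, ← Finset.mul_sum, ← Finset.mul_sum]
      _ = 2 * ∑ v, ((∑ e, (if v = b e then (1:ℝ) else 0))
            + ∑ e, η e^2 * (if v = a e then (1:ℝ) else 0)) * f v := by
          rw [hswb, hswa, ← mul_add, ← Finset.sum_add_distrib]
          congr 1
          exact Finset.sum_congr rfl fun v _ => by ring
      _ = 2 * ∑ v, (x v)^2 := by
          congr 1
          refine Finset.sum_congr rfl fun v _ => ?_
          rw [← hgdeg v, hfdef]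
          exact hxg x v
  have qF : ∀ x : V → ℝ, ∑ e, (F.mulVec x e)^2 ≤ 2 * ∑ v, (x v)^2 := by
    intro x
    set f : V → ℝ := fun v => ((Real.sqrt (LG v v))⁻¹ * x v)^2 with hfdef
    have hf0 : ∀ v, 0 ≤ f v := fun v => sq_nonneg _
    have step1 : ∑ e, (F.mulVec x e)^2 ≤ ∑ e, (2 * f (b e) + 2 * f (a e)) := by
      refine Finset.sum_le_sum fun e _ => ?_
      rw [hFmv x e]
      simp only [hfdef]
      nlinarith [sq_nonneg ((Real.sqrt (LG (b e) (b e)))⁻¹ * x (b e)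
        + (Real.sqrt (LG (a e) (a e)))⁻¹ * x (a e))]
    have hswb : ∑ e, f (b e) = ∑ v, (∑ e, (if v = b e then (1:ℝ) else 0)) * f v := by
      simpa using swap_sum b (fun _ => (1:ℝ)) f
    have hswa : ∑ e, f (a e) = ∑ v, (∑ e, (if v = a e then (1:ℝ) else 0)) * f v := by
      simpa using swap_sum a (fun _ => (1:ℝ)) f
    calc ∑ e, (F.mulVec x e)^2 ≤ ∑ e, (2 * f (b e) + 2 * f (a e)) := step1
      _ = 2 * ∑ v, ((∑ e, (if v = b e then (1:ℝ) else 0))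
            + ∑ e, (if v = a e then (1:ℝ) else 0)) * f v := by
          rw [Finset.sum_add_distrib, ← Finset.mul_sum, ← Finset.mul_sum, hswb, hswa,
            ← mul_add, ← Finset.sum_add_distrib]
          congr 1
          exact Finset.sum_congr rfl fun v _ => by ring
      _ = 2 * ∑ v, LS v v * f v := by
          congr 1
          refine Finset.sum_congr rfl fun v _ => ?_
          rw [← hddeg v]
      _ ≤ 2 * ∑ v, LG v v * f v := by
          have : ∑ v, LS v v * f v ≤ ∑ v, LG v v * f v :=
            Finset.sum_le_sum fun v _ => mul_le_mul_of_nonneg_right (hd_le_g v) (hf0 v)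
          linarith
      _ = 2 * ∑ v, (x v)^2 := by
          congr 1
          exact Finset.sum_congr rfl fun v _ => hxg x v
  have qS : ∀ x : V → ℝ, ∑ e, (S.mulVec x e)^2 ≤ 2 * ∑ v, (x v)^2 := by
    intro x
    set f : V → ℝ := fun v => ((Real.sqrt (LS v v))⁻¹ * x v)^2 with hfdef
    have step1 : ∑ e, (S.mulVec x e)^2 ≤ ∑ e, (2 * f (b e) + 2 * f (a e)) := by
      refine Finset.sum_le_sum fun e _ => ?_
      rw [hSmv x e]
      simp only [hfdef]
      nlinarith [sq_nonneg ((Real.sqrt (LS (b e) (b e)))⁻¹ * x (b e)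
        + (Real.sqrt (LS (a e) (a e)))⁻¹ * x (a e))]
    have hswb : ∑ e, f (b e) = ∑ v, (∑ e, (if v = b e then (1:ℝ) else 0)) * f v := by
      simpa using swap_sum b (fun _ => (1:ℝ)) f
    have hswa : ∑ e, f (a e) = ∑ v, (∑ e, (if v = a e then (1:ℝ) else 0)) * f v := by
      simpa using swap_sum a (fun _ => (1:ℝ)) f
    calc ∑ e, (S.mulVec x e)^2 ≤ ∑ e, (2 * f (b e) + 2 * f (a e)) := step1
      _ = 2 * ∑ v, ((∑ e, (if v = b e then (1:ℝ) else 0))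
            + ∑ e, (if v = a e then (1:ℝ) else 0)) * f v := by
          rw [Finset.sum_add_distrib, ← Finset.mul_sum, ← Finset.mul_sum, hswb, hswa,
            ← mul_add, ← Finset.sum_add_distrib]
          congr 1
          exact Finset.sum_congr rfl fun v _ => by ring
      _ = 2 * ∑ v, (x v)^2 := by
          congr 1
          refine Finset.sum_congr rfl fun v _ => ?_
          rw [← hddeg v, hfdef]
          exact hxd x v
  have qE1 : ∀ x : V → ℝ, ∑ e, (E1.mulVec x e)^2 ≤ β^2 * ∑ v, (x v)^2 := by
    intro x
    set f : V → ℝ := fun v => ((Real.sqrt (LG v v))⁻¹ * x v)^2 with hfdef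
    have hf0 : ∀ v, 0 ≤ f v := fun v => sq_nonneg _
    have step1 : ∑ e, (E1.mulVec x e)^2 ≤ ∑ e, β^2 * f (a e) := by
      refine Finset.sum_le_sum fun e _ => ?_
      rw [hE1mv x e]
      simp only [hfdef]
      have h1 := (hη e).1
      have h2 := (hη e).2
      have key : (1 - η e)^2 ≤ β^2 := by nlinarith
      calc ((1 - η e) * ((Real.sqrt (LG (a e) (a e)))⁻¹ * x (a e)))^2
          = (1 - η e)^2 * ((Real.sqrt (LG (a e) (a e)))⁻¹ * x (a e))^2 := by ring
        _ ≤ β^2 * ((Real.sqrt (LG (a e) (a e)))⁻¹ * x (a e))^2 :=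
            mul_le_mul_of_nonneg_right key (sq_nonneg _)
    have hswa : ∑ e, f (a e) = ∑ v, (∑ e, (if v = a e then (1:ℝ) else 0)) * f v := by
      simpa using swap_sum a (fun _ => (1:ℝ)) f
    calc ∑ e, (E1.mulVec x e)^2 ≤ ∑ e, β^2 * f (a e) := step1
      _ = β^2 * ∑ v, (∑ e, (if v = a e then (1:ℝ) else 0)) * f v := by
          rw [← Finset.mul_sum, hswa]
      _ ≤ β^2 * ∑ v, LG v v * f v := by
          have : ∑ v, (∑ e, (if v = a e then (1:ℝ) else 0)) * f v ≤ ∑ v, LG v v * f v :=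
            Finset.sum_le_sum fun v _ => mul_le_mul_of_nonneg_right (hQ_le_g v) (hf0 v)
          nlinarith [sq_nonneg β]
      _ = β^2 * ∑ v, (x v)^2 := by
          congr 1
          exact Finset.sum_congr rfl fun v _ => hxg x v
  -- bounds on the diagonal correction C
  have hc_bound : ∀ v, 1 - β ≤ Real.sqrt (LS v v) * (Real.sqrt (LG v v))⁻¹
      ∧ Real.sqrt (LS v v) * (Real.sqrt (LG v v))⁻¹ ≤ 1 := by
    intro v
    constructor
    · rw [← div_eq_mul_inv, le_div_iff₀ (sqrtg_pos v)]
      have h1 : Real.sqrt (LG v v) ≤ (1+β) * Real.sqrt (LS v v) := by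
        have h2 : Real.sqrt (LG v v) ≤ Real.sqrt ((1+β)^2 * LS v v) :=
          Real.sqrt_le_sqrt (hg_le v)
        rwa [Real.sqrt_mul (sq_nonneg _), Real.sqrt_sq (by linarith)] at h2
      nlinarith [mul_le_mul_of_nonneg_left h1 (by linarith : (0:ℝ) ≤ 1 - β),
        mul_nonneg (mul_nonneg hβ0 hβ0) (sqrtd_pos v).le]
    · rw [← div_eq_mul_inv, div_le_one (sqrtg_pos v)]
      exact Real.sqrt_le_sqrt (hd_le_g v)
  have qC : ∀ x : V → ℝ, ∑ v, (C.mulVec x v)^2 ≤ 1^2 * ∑ v, (x v)^2 := by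
    intro x
    rw [one_pow, one_mul]
    refine Finset.sum_le_sum fun v _ => ?_
    rw [hCdef, Matrix.mulVec_diagonal]
    have h1 := (hc_bound v).1
    have h2 := (hc_bound v).2
    have h0 : 0 ≤ Real.sqrt (LS v v) * (Real.sqrt (LG v v))⁻¹ :=
      mul_nonneg (Real.sqrt_nonneg _) (inv_nonneg.2 (Real.sqrt_nonneg _))
    have key : (Real.sqrt (LS v v) * (Real.sqrt (LG v v))⁻¹)^2 ≤ 1 := by nlinarith
    calc (Real.sqrt (LS v v) * (Real.sqrt (LG v v))⁻¹ * x v)^2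
        = (Real.sqrt (LS v v) * (Real.sqrt (LG v v))⁻¹)^2 * (x v)^2 := by ring
      _ ≤ 1 * (x v)^2 := mul_le_mul_of_nonneg_right key (sq_nonneg _)
      _ = (x v)^2 := one_mul _
  have hC1 : C - 1 = Matrix.diagonal (fun v => Real.sqrt (LS v v) * (Real.sqrt (LG v v))⁻¹ - 1) := by
    rw [hCdef, ← Matrix.diagonal_one, Matrix.diagonal_sub]
  have qC1 : ∀ x : V → ℝ, ∑ v, ((C - 1).mulVec x v)^2 ≤ β^2 * ∑ v, (x v)^2 := by
    intro x
    rw [Finset.mul_sum]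
    refine Finset.sum_le_sum fun v _ => ?_
    rw [hC1, Matrix.mulVec_diagonal]
    have h1 := (hc_bound v).1
    have h2 := (hc_bound v).2
    have key : (Real.sqrt (LS v v) * (Real.sqrt (LG v v))⁻¹ - 1)^2 ≤ β^2 := by nlinarith
    calc ((Real.sqrt (LS v v) * (Real.sqrt (LG v v))⁻¹ - 1) * x v)^2
        = (Real.sqrt (LS v v) * (Real.sqrt (LG v v))⁻¹ - 1)^2 * (x v)^2 := by ring
      _ ≤ β^2 * (x v)^2 := mul_le_mul_of_nonneg_right key (sq_nonneg _)
  -- matrix identities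
  have hNGid : NG = Aᵀ * A := by
    have h1 : Aᵀ * A = Dg * LG * Dg := by
      rw [hA, Matrix.transpose_mul, hDg, Matrix.diagonal_transpose, hLG]
      simp only [Matrix.mul_assoc]
    rw [h1]
    ext u v
    rw [hDg, Matrix.mul_diagonal, Matrix.diagonal_mul, hNG, div_eq_mul_inv, mul_inv]
    ring
  have hNSid : NS = Sᵀ * S := by
    have h1 : Sᵀ * S = Ds * LS * Ds := by
      rw [hSdef, Matrix.transpose_mul, hDs, Matrix.diagonal_transpose, hLS]
      simp only [Matrix.mul_assoc]
    rw [h1]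
    ext u v
    rw [hDs, Matrix.mul_diagonal, Matrix.diagonal_mul, hNS, div_eq_mul_inv, mul_inv]
    ring
  have hFSC : F = S * C := by
    have hfun : (fun v => (Real.sqrt (LS v v))⁻¹ * (Real.sqrt (LS v v) * (Real.sqrt (LG v v))⁻¹))
        = (fun v => (Real.sqrt (LG v v))⁻¹) :=
      funext fun v => inv_mul_cancel_left₀ (sqrtd_pos v).ne' _
    rw [hSdef, hF, hCdef, hDs, hDg, Matrix.mul_assoc, Matrix.diagonal_mul_diagonal, hfun]
  have hCT : Cᵀ = C := by rw [hCdef, Matrix.diagonal_transpose]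
  have hAsum : A = E1 + F := by rw [hE1, sub_add_cancel]
  have hFtF : Fᵀ * F = C * NS * C := by
    rw [hFSC, Matrix.transpose_mul, hCT, hNSid]
    simp only [Matrix.mul_assoc]
  have hdecomp : NG - NS = E1ᵀ * A + Fᵀ * E1 + ((C - 1) * NS * C + NS * (C - 1)) := by
    calc NG - NS = (E1 + F)ᵀ * (E1 + F) - NS := by rw [← hAsum, ← hNGid]
      _ = E1ᵀ * E1 + E1ᵀ * F + (Fᵀ * E1 + Fᵀ * F) - NS := by
          rw [Matrix.transpose_add, Matrix.add_mul, Matrix.mul_add, Matrix.mul_add]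
      _ = E1ᵀ * (E1 + F) + Fᵀ * E1 + (C * NS * C - NS) := by
          rw [Matrix.mul_add, hFtF]; abel
      _ = E1ᵀ * A + Fᵀ * E1 + ((C - 1) * NS * C + NS * (C - 1)) := by
          rw [← hAsum]
          congr 1
          rw [Matrix.sub_mul, Matrix.sub_mul, Matrix.mul_sub, Matrix.one_mul, Matrix.mul_one]
          abel
  -- norm bounds
  have sq2_nonneg : (0:ℝ) ≤ Real.sqrt 2 := Real.sqrt_nonneg 2
  have qA' : ∀ x : V → ℝ, ∑ e, (A.mulVec x e)^2 ≤ (Real.sqrt 2)^2 * ∑ v, (x v)^2 := by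
    intro x; rw [Real.sq_sqrt (by norm_num : (0:ℝ) ≤ 2)]; exact qA x
  have qF' : ∀ x : V → ℝ, ∑ e, (F.mulVec x e)^2 ≤ (Real.sqrt 2)^2 * ∑ v, (x v)^2 := by
    intro x; rw [Real.sq_sqrt (by norm_num : (0:ℝ) ≤ 2)]; exact qF x
  have qS' : ∀ x : V → ℝ, ∑ e, (S.mulVec x e)^2 ≤ (Real.sqrt 2)^2 * ∑ v, (x v)^2 := by
    intro x; rw [Real.sq_sqrt (by norm_num : (0:ℝ) ≤ 2)]; exact qS x
  have n1 : ‖Matrix.toEuclideanCLM (𝕜 := ℝ) (E1ᵀ * A)‖ ≤ β * Real.sqrt 2 :=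
    norm_clm_le _ _ (by positivity) (key_sq E1 A β (Real.sqrt 2) qE1 qA')
  have n2 : ‖Matrix.toEuclideanCLM (𝕜 := ℝ) (Fᵀ * E1)‖ ≤ Real.sqrt 2 * β :=
    norm_clm_le _ _ (by positivity) (key_sq F E1 (Real.sqrt 2) β qF' qE1)
  have nNS : ‖Matrix.toEuclideanCLM (𝕜 := ℝ) NS‖ ≤ 2 := by
    have h := key_sq S S (Real.sqrt 2) (Real.sqrt 2) qS' qS'
    rw [Real.mul_self_sqrt (by norm_num : (0:ℝ) ≤ 2)] at h
    rw [hNSid]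
    exact norm_clm_le _ _ (by norm_num) h
  have nC : ‖Matrix.toEuclideanCLM (𝕜 := ℝ) C‖ ≤ 1 :=
    norm_clm_le _ _ zero_le_one qC
  have nC1 : ‖Matrix.toEuclideanCLM (𝕜 := ℝ) ((C - 1 : Matrix V V ℝ))‖ ≤ β :=
    norm_clm_le _ _ hβ0 qC1
  -- assemble
  have t3 : ‖Matrix.toEuclideanCLM (𝕜 := ℝ) (((C - 1) * NS * C : Matrix V V ℝ))‖ ≤ β * 2 * 1 := by
    refine le_trans (norm_clm_mul_le ((C - 1) * NS) C) ?_
    refine mul_le_mul ?_ nC (norm_nonneg _) (by positivity)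
    refine le_trans (norm_clm_mul_le (C - 1) NS) ?_
    exact mul_le_mul nC1 nNS (norm_nonneg _) hβ0
  have t4 : ‖Matrix.toEuclideanCLM (𝕜 := ℝ) ((NS * (C - 1) : Matrix V V ℝ))‖ ≤ 2 * β := by
    refine le_trans (norm_clm_mul_le NS (C - 1)) ?_
    exact mul_le_mul nNS nC1 (norm_nonneg _) (by norm_num)
  have hsq2 : Real.sqrt 2 ≤ 3 := by
    nlinarith [Real.sq_sqrt (by norm_num : (0:ℝ) ≤ 2), Real.sqrt_nonneg 2]
  rw [hdecomp]
  calc ‖Matrix.toEuclideanCLM (𝕜 := ℝ)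
        ((E1ᵀ * A + Fᵀ * E1 + ((C - 1) * NS * C + NS * (C - 1)) : Matrix V V ℝ))‖
      ≤ ‖Matrix.toEuclideanCLM (𝕜 := ℝ) ((E1ᵀ * A + Fᵀ * E1 : Matrix V V ℝ))‖
        + ‖Matrix.toEuclideanCLM (𝕜 := ℝ) (((C - 1) * NS * C + NS * (C - 1) : Matrix V V ℝ))‖ :=
      norm_clm_add_le _ _
    _ ≤ (‖Matrix.toEuclideanCLM (𝕜 := ℝ) (E1ᵀ * A)‖
          + ‖Matrix.toEuclideanCLM (𝕜 := ℝ) (Fᵀ * E1)‖)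
        + (‖Matrix.toEuclideanCLM (𝕜 := ℝ) (((C - 1) * NS * C : Matrix V V ℝ))‖
          + ‖Matrix.toEuclideanCLM (𝕜 := ℝ) ((NS * (C - 1) : Matrix V V ℝ))‖) :=
      add_le_add (norm_clm_add_le _ _) (norm_clm_add_le _ _)
    _ ≤ 10 * β := by nlinarith [mul_le_mul_of_nonneg_left hsq2 hβ0]
end

section
/- Let G = (V,E,η) be a β-balanced lossy flow graph (η_e ∈ [1,1+β]) with smoothed graph Ḡ satisfying 20β ≤ λ₂(N_Ḡ) ≤ 1, let d ∈ ℝ^V satisfy d_G ≤ d ≤ c·d_G for c ≥ 1, D = diag(d), ε ∈ [0,1], and let λ₁ be the smallest eigenvalue of M := D^{−1/2} L_G D^{−1/2} + ε·I with unit eigenvector v_min. Then (λ₂(N_Ḡ)/(2c))·(I − (1 − λ₁)·v_min v_minᵀ) ⪯ M ⪯ 4·(I − (1 − λ₁)·v_min v_minᵀ). In particular λ₂(M) ≥ λ₂(N_Ḡ)/(2c) and λₙ(M) ≤ 4. -/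
open Matrix

lemma dot_mulVec_eq {V : Type*} [Fintype V] (A : Matrix V V ℝ) (x y : V → ℝ) :
    x ⬝ᵥ A.mulVec y = ∑ u, ∑ v, x u * A u v * y v := by
  simp [dotProduct, Matrix.mulVec, Finset.mul_sum, mul_assoc]

lemma quad_sum {V E : Type*} [Fintype V] [Fintype E] (B : Matrix E V ℝ) (x : V → ℝ) :
    ∑ u, ∑ v, x u * ((Bᵀ * B) u v) * x v = ∑ e, (∑ v, B e v * x v) ^ 2 := by
  have h : ∀ e, (∑ v, B e v * x v) ^ 2 = ∑ u, ∑ v, x u * (B e u * B e v) * x v := by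
    intro e
    rw [sq, Finset.sum_mul_sum]
    exact Finset.sum_congr rfl fun u _ => Finset.sum_congr rfl fun v _ => by ring
  calc ∑ u, ∑ v, x u * ((Bᵀ * B) u v) * x v
      = ∑ u, ∑ v, ∑ e, x u * (B e u * B e v) * x v := by
        refine Finset.sum_congr rfl fun u _ => Finset.sum_congr rfl fun v _ => ?_
        simp [Matrix.mul_apply, Matrix.transpose_apply, Finset.mul_sum, Finset.sum_mul]
    _ = ∑ u, ∑ e, ∑ v, x u * (B e u * B e v) * x v :=
        Finset.sum_congr rfl fun u _ =>
          Finset.sum_comm (f := fun v e => x u * (B e u * B e v) * x v)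
    _ = ∑ e, ∑ u, ∑ v, x u * (B e u * B e v) * x v :=
        Finset.sum_comm (f := fun u e => ∑ v, x u * (B e u * B e v) * x v)
    _ = ∑ e, (∑ v, B e v * x v) ^ 2 := Finset.sum_congr rfl fun e _ => (h e).symm

lemma scaled_quad {V E : Type*} [Fintype V] [Fintype E] (B : Matrix E V ℝ) (s : V → ℝ)
    (hs : ∀ v, s v ≠ 0) (A : Matrix V V ℝ)
    (hA : ∀ u v, A u v = (Bᵀ * B) u v / (s u * s v)) (z : V → ℝ) :
    z ⬝ᵥ A.mulVec z = ∑ e, (∑ v, B e v * (z v / s v)) ^ 2 := by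
  rw [dot_mulVec_eq, ← quad_sum B (fun v => z v / s v)]
  refine Finset.sum_congr rfl fun u _ => Finset.sum_congr rfl fun v _ => ?_
  rw [hA]
  field_simp [hs u, hs v]

lemma complete_of_orth {V : Type*} [Fintype V] [DecidableEq V]
    (uS : Fin (Fintype.card V) → V → ℝ)
    (horthS : ∀ i j, uS i ⬝ᵥ uS j = if i = j then (1 : ℝ) else 0) :
    ∀ u v : V, (∑ i, uS i u * uS i v) = if u = v then (1 : ℝ) else 0 := by
  classical
  let e : V ≃ Fin (Fintype.card V) := Fintype.equivFin V
  set A : Matrix (Fin (Fintype.card V)) V ℝ := fun i v => uS i v with hA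
  have h1 : A * Aᵀ = 1 := by
    ext i j
    rw [Matrix.mul_apply, Matrix.one_apply]
    simp only [Matrix.transpose_apply]
    simpa [A, Matrix.transpose_apply, dotProduct] using horthS i j
  have h2 : Aᵀ * A = 1 := (Matrix.mul_eq_one_comm_of_equiv e.symm).mp h1
  intro u v
  have := congrFun (congrFun h2 u) v
  rw [Matrix.mul_apply, Matrix.one_apply] at this
  simp only [Matrix.transpose_apply] at this
  simpa [A, Matrix.transpose_apply] using this

lemma real_isHermitian_of_symm {V : Type*} [Fintype V] (A : Matrix V V ℝ)
    (h : ∀ u v, A u v = A v u) : A.IsHermitian :=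
  Matrix.ext fun u v => by rw [Matrix.conjTranspose_apply, star_trivial, h]


lemma aux_pos (αc sc yy : ℝ) (hyy : 0 < yy) (hne : ¬(αc = 0 ∧ sc = 0)) :
    0 < αc ^ 2 + sc ^ 2 * yy := by
  rcases not_and_or.mp hne with h | h
  · have : 0 < αc ^ 2 := pow_two_pos_of_ne_zero h
    nlinarith [sq_nonneg sc]
  · have : 0 < sc ^ 2 := pow_two_pos_of_ne_zero h
    nlinarith [sq_nonneg αc]

lemma aux_upper (t lam1 yy yMy αc sc : ℝ) (hyy : 0 < yy) (hl1 : lam1 * yy ≤ yMy)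
    (hcon : yMy < t * yy) (hne : ¬(αc = 0 ∧ sc = 0)) :
    αc ^ 2 * lam1 + sc ^ 2 * yMy < t * (αc ^ 2 + sc ^ 2 * yy) := by
  have hlt : lam1 < t := by nlinarith
  rcases not_and_or.mp hne with h | h
  · have hp : 0 < αc ^ 2 := pow_two_pos_of_ne_zero h
    nlinarith [mul_le_mul_of_nonneg_left hcon.le (sq_nonneg sc),
      mul_lt_mul_of_pos_left hlt hp]
  · have hp : 0 < sc ^ 2 := pow_two_pos_of_ne_zero h
    nlinarith [mul_lt_mul_of_pos_left hcon hp,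
      mul_le_mul_of_nonneg_left hlt.le (sq_nonneg αc)]

lemma aux_num (β lam2 : ℝ) (hβ0 : 0 ≤ β) (hβlam : β ≤ 1 / 20)
    (hlow : 20 * β ≤ lam2) (hup : lam2 ≤ 1) (hl2nn : 0 ≤ lam2) :
    lam2 * (1 + β) ^ 2 / 2 ≤ 3 / 4 * lam2 - 3 * β ^ 2 := by
  nlinarith [mul_le_mul_of_nonneg_left hlow hβ0,
    mul_le_mul_of_nonneg_right hβlam hl2nn,
    mul_le_mul_of_nonneg_left hup (sq_nonneg β),
    mul_nonneg hβ0 hβ0, sq_nonneg β]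

lemma aux_psd1 (t lam1 α2 yy yMy : ℝ) (h4 : t * yy ≤ yMy) (hl1 : 0 ≤ lam1)
    (ht : 0 ≤ t) (ht1 : t ≤ 1 / 2) (hα : 0 ≤ α2) :
    0 ≤ (lam1 * α2 + yMy) - t * ((α2 + yy) - (1 - lam1) * α2) := by
  nlinarith [mul_nonneg hl1 hα, mul_le_mul_of_nonneg_right ht1 (mul_nonneg hl1 hα)]

lemma aux_psd2 (lam1 α2 yy yMy : ℝ) (h4 : yMy ≤ 4 * yy) (hl1 : 0 ≤ lam1)
    (hα : 0 ≤ α2) :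
    0 ≤ 4 * ((α2 + yy) - (1 - lam1) * α2) - (lam1 * α2 + yMy) := by nlinarith

set_option maxHeartbeats 1000000 in
/-- Let `G` be a `β`-balanced lossy flow graph whose smoothed graph `Ḡ`
has normalized Laplacian `N_Ḡ` with second-smallest eigenvalue `lam2` satisfying
`20β ≤ lam2 ≤ 1`; let `d_G ≤ d ≤ c·d_G` (`c ≥ 1`), `ε ∈ [0,1]`, and let `lam1` be the
smallest eigenvalue of `M = D^{-1/2}L_G D^{-1/2} + ε·I` with unit eigenvector `vmin`.
Then `(lam2/(2c))·(I-(1-lam1)·vminvminᵀ) ⪯ M ⪯ 4·(I-(1-lam1)·vminvminᵀ)`.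
In particular `λ₂(M) ≥ lam2/(2c)` (as a Rayleigh bound on the orthogonal complement of
`vmin`) and `λₙ(M) ≤ 4`. -/
theorem stmt_8 {V E : Type*} [Fintype V] [Fintype E] [DecidableEq V]
    (a b : E → V) (hab : ∀ e, a e ≠ b e)
    (β : ℝ) (hβ0 : 0 ≤ β) (hβ1 : β ≤ 1)
    (η : E → ℝ) (hη : ∀ e, 1 ≤ η e ∧ η e ≤ 1 + β)
    (BG BS : Matrix E V ℝ)
    (hBG : ∀ e v, BG e v = (if v = b e then 1 else 0) - η e * (if v = a e then 1 else 0))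
    (hBS : ∀ e v, BS e v = (if v = b e then 1 else 0) - (if v = a e then 1 else 0))
    (LG LS : Matrix V V ℝ) (hLG : LG = BGᵀ * BG) (hLS : LS = BSᵀ * BS)
    (hdSpos : ∀ v, 0 < LS v v)
    (NS : Matrix V V ℝ)
    (hNS : ∀ u v, NS u v = LS u v / (Real.sqrt (LS u u) * Real.sqrt (LS v v)))
    (hcard : 2 ≤ Fintype.card V)
    (lamS : Fin (Fintype.card V) → ℝ) (uS : Fin (Fintype.card V) → V → ℝ)
    (hmonoS : Monotone lamS)
    (heigS : ∀ i, NS.mulVec (uS i) = lamS i • uS i)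
    (horthS : ∀ i j, uS i ⬝ᵥ uS j = if i = j then (1 : ℝ) else 0)
    (lam2 : ℝ) (hlam2 : lam2 = lamS ⟨1, by omega⟩)
    (hlow : 20 * β ≤ lam2) (hup : lam2 ≤ 1)
    (c : ℝ) (hc : 1 ≤ c)
    (d : V → ℝ) (hd : ∀ u, LG u u ≤ d u ∧ d u ≤ c * LG u u)
    (ε : ℝ) (hε0 : 0 ≤ ε) (hε1 : ε ≤ 1)
    (M : Matrix V V ℝ)
    (hM : ∀ u v, M u v = LG u v / (Real.sqrt (d u) * Real.sqrt (d v)) +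
      (if u = v then ε else 0))
    (lam1 : ℝ) (vmin : V → ℝ)
    (heigmin : M.mulVec vmin = lam1 • vmin) (hunit : vmin ⬝ᵥ vmin = 1)
    (hmin : ∀ x : V → ℝ, lam1 * (x ⬝ᵥ x) ≤ x ⬝ᵥ M.mulVec x) :
    (M - (lam2 / (2 * c)) • ((1 : Matrix V V ℝ) - (1 - lam1) • vecMulVec vmin vmin)).PosSemidef ∧
    ((4 : ℝ) • ((1 : Matrix V V ℝ) - (1 - lam1) • vecMulVec vmin vmin) - M).PosSemidef ∧
    (∀ x : V → ℝ, x ⬝ᵥ vmin = 0 → (lam2 / (2 * c)) * (x ⬝ᵥ x) ≤ x ⬝ᵥ M.mulVec x) ∧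
    (∀ x : V → ℝ, x ⬝ᵥ M.mulVec x ≤ 4 * (x ⬝ᵥ x)) := by
  classical
  have hβlam : β ≤ 1 / 20 := by nlinarith
  have hlam2nn : 0 ≤ lam2 := by nlinarith
  have hc0 : (0:ℝ) < c := by linarith
  -- diagonal formulas
  have hLGd : ∀ v, LG v v
      = ∑ e, ((if v = b e then (1:ℝ) else 0) + η e ^ 2 * (if v = a e then 1 else 0)) := by
    intro v
    rw [hLG]
    simp only [Matrix.mul_apply, Matrix.transpose_apply]
    refine Finset.sum_congr rfl fun e _ => ?_
    rw [hBG]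
    by_cases h1 : v = b e <;> by_cases h2 : v = a e
    · exact absurd (h2.symm.trans h1) (hab e)
    all_goals (simp [h1, h2, hab e, Ne.symm (hab e)]; try ring)
  have hLSd : ∀ v, LS v v
      = ∑ e, ((if v = b e then (1:ℝ) else 0) + (if v = a e then 1 else 0)) := by
    intro v
    rw [hLS]
    simp only [Matrix.mul_apply, Matrix.transpose_apply]
    refine Finset.sum_congr rfl fun e _ => ?_
    rw [hBS]
    by_cases h1 : v = b e <;> by_cases h2 : v = a e
    · exact absurd (h2.symm.trans h1) (hab e)
    all_goals (simp [h1, h2, hab e, Ne.symm (hab e)]; try ring)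
  -- diagonal comparisons
  have hdiag1 : ∀ v, LS v v ≤ LG v v := by
    intro v
    rw [hLGd, hLSd]
    refine Finset.sum_le_sum fun e _ => ?_
    have h1 := (hη e).1
    have he2 : (1:ℝ) ≤ η e ^ 2 := by nlinarith
    have habt : |η e| = η e := abs_of_nonneg (by linarith)
    by_cases hx : v = b e <;> by_cases hy : v = a e
    · exact absurd (hy.symm.trans hx) (hab e)
    all_goals (simp [hx, hy, hab e, Ne.symm (hab e), habt]; try nlinarith)
  have hdiag2 : ∀ v, LG v v ≤ (1 + β) ^ 2 * LS v v := by
    intro v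
    rw [hLGd, hLSd]
    rw [Finset.mul_sum]
    refine Finset.sum_le_sum fun e _ => ?_
    have h1 := (hη e).1
    have h2 := (hη e).2
    have hb2 : (1:ℝ) ≤ (1 + β) ^ 2 := by nlinarith
    have he2 : η e ^ 2 ≤ (1 + β) ^ 2 := by nlinarith
    have habt : |η e| = η e := abs_of_nonneg (by linarith)
    have habt2 : |1 + β| = 1 + β := abs_of_nonneg (by linarith)
    by_cases hx : v = b e <;> by_cases hy : v = a e
    · exact absurd (hy.symm.trans hx) (hab e)
    all_goals (simp [hx, hy, hab e, Ne.symm (hab e), habt, habt2]; try nlinarith)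
  have hdpos : ∀ v, 0 < d v := fun v =>
    lt_of_lt_of_le (lt_of_lt_of_le (hdSpos v) (hdiag1 v)) (hd v).1
  have hsd : ∀ v, Real.sqrt (d v) ≠ 0 := fun v => ne_of_gt (Real.sqrt_pos.mpr (hdpos v))
  have hsS : ∀ v, Real.sqrt (LS v v) ≠ 0 := fun v => ne_of_gt (Real.sqrt_pos.mpr (hdSpos v))
  -- row sums
  have hrowG : ∀ (x : V → ℝ) e, ∑ v, BG e v * x v = x (b e) - η e * x (a e) := by
    intro x e
    simp only [hBG, sub_mul, ite_mul, one_mul, zero_mul, mul_assoc]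
    rw [Finset.sum_sub_distrib]
    simp [Finset.sum_ite_eq', Finset.mul_sum, mul_ite]
  have hrowS : ∀ (x : V → ℝ) e, ∑ v, BS e v * x v = x (b e) - x (a e) := by
    intro x e
    simp only [hBS, sub_mul, ite_mul, one_mul, zero_mul]
    rw [Finset.sum_sub_distrib]
    simp [Finset.sum_ite_eq']
  -- vertex-sum identities
  have hI1 : ∀ x : V → ℝ, ∑ v, LS v v * x v ^ 2 = ∑ e, (x (b e) ^ 2 + x (a e) ^ 2) := by
    intro x
    have h : ∀ v, LS v v * x v ^ 2
        = ∑ e, ((if v = b e then x v ^ 2 else 0) + (if v = a e then x v ^ 2 else 0)) := by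
      intro v
      rw [hLSd, Finset.sum_mul]
      exact Finset.sum_congr rfl fun e _ => by
        by_cases h1 : v = b e <;> by_cases h2 : v = a e <;>
          simp [h1, h2, hab e, Ne.symm (hab e)]
    simp only [h]
    rw [Finset.sum_comm]
    refine Finset.sum_congr rfl fun e _ => ?_
    rw [Finset.sum_add_distrib]
    simp [Finset.sum_ite_eq']
  have hI2 : ∀ x : V → ℝ, ∑ v, LG v v * x v ^ 2
      = ∑ e, (x (b e) ^ 2 + η e ^ 2 * x (a e) ^ 2) := by
    intro x
    have h : ∀ v, LG v v * x v ^ 2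
        = ∑ e, ((if v = b e then x v ^ 2 else 0) + (if v = a e then η e ^ 2 * x v ^ 2 else 0)) := by
      intro v
      rw [hLGd, Finset.sum_mul]
      exact Finset.sum_congr rfl fun e _ => by
        by_cases h1 : v = b e <;> by_cases h2 : v = a e <;>
          (simp [h1, h2, hab e, Ne.symm (hab e)]; try ring)
    simp only [h]
    rw [Finset.sum_comm]
    refine Finset.sum_congr rfl fun e _ => ?_
    rw [Finset.sum_add_distrib]
    simp [Finset.sum_ite_eq']
  -- quadratic form of M
  set A : Matrix V V ℝ := fun u v => LG u v / (Real.sqrt (d u) * Real.sqrt (d v)) with hAdef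
  clear_value A
  have hAfm : ∀ u v, A u v = (BGᵀ * BG) u v / (Real.sqrt (d u) * Real.sqrt (d v)) := by
    intro u v; rw [hAdef, ← hLG]
  have hQ : ∀ z : V → ℝ, z ⬝ᵥ M.mulVec z
      = (∑ e, ((z (b e) / Real.sqrt (d (b e))) - η e * (z (a e) / Real.sqrt (d (a e)))) ^ 2)
        + ε * (z ⬝ᵥ z) := by
    intro z
    have hsplit : z ⬝ᵥ M.mulVec z = z ⬝ᵥ A.mulVec z + ε * (z ⬝ᵥ z) := by
      rw [dot_mulVec_eq, dot_mulVec_eq]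
      have : ∀ u v, z u * M u v * z v
          = z u * A u v * z v + (if u = v then z u * ε * z v else 0) := by
        intro u v
        rw [hM, hAdef]
        by_cases h : u = v <;> simp [h] <;> ring
      simp only [this, Finset.sum_add_distrib]
      congr 1
      simp only [Finset.sum_ite_eq, Finset.mem_univ, if_true]
      simp [dotProduct, Finset.mul_sum]
      exact Finset.sum_congr rfl fun u _ => by ring
    rw [hsplit, scaled_quad BG (fun v => Real.sqrt (d v)) hsd A hAfm z]
    congr 1
    exact Finset.sum_congr rfl fun e _ => by rw [hrowG (fun v => z v / Real.sqrt (d v)) e]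
  -- quadratic form of NS
  have hNSfm : ∀ u v, NS u v = (BSᵀ * BS) u v / (Real.sqrt (LS u u) * Real.sqrt (LS v v)) := by
    intro u v; rw [hNS, ← hLS]
  have hQS : ∀ w : V → ℝ, w ⬝ᵥ NS.mulVec w
      = ∑ e, ((w (b e) / Real.sqrt (LS (b e) (b e)))
          - (w (a e) / Real.sqrt (LS (a e) (a e)))) ^ 2 := by
    intro w
    rw [scaled_quad BS (fun v => Real.sqrt (LS v v)) hsS NS hNSfm w]
    exact Finset.sum_congr rfl fun e _ => by
      rw [hrowS (fun v => w v / Real.sqrt (LS v v)) e]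
  have hdnn : ∀ z : V → ℝ, 0 ≤ z ⬝ᵥ z := fun z =>
    Finset.sum_nonneg fun v _ => mul_self_nonneg _
  have hMnn : ∀ z : V → ℝ, 0 ≤ z ⬝ᵥ M.mulVec z := by
    intro z; rw [hQ]
    exact add_nonneg (Finset.sum_nonneg fun e _ => sq_nonneg _) (mul_nonneg hε0 (hdnn z))
  have hlam1nn : 0 ≤ lam1 := by
    have h1 := hMnn vmin
    rw [heigmin] at h1
    simpa [dotProduct_smul, hunit] using h1
  -- the spectral gap lemma for NS
  have h0lt : 0 < Fintype.card V := by omega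
  have h1lt : 1 < Fintype.card V := by omega
  have hcomp := complete_of_orth uS horthS
  have hwrep : ∀ (w : V → ℝ) (u : V), w u = ∑ i, (uS i ⬝ᵥ w) * uS i u := by
    intro w u
    calc w u = ∑ v, (if u = v then (1:ℝ) else 0) * w v := by
          simp [Finset.sum_ite_eq]
      _ = ∑ v, (∑ i, uS i u * uS i v) * w v := by
          refine Finset.sum_congr rfl fun v _ => ?_; rw [hcomp]
      _ = ∑ v, ∑ i, uS i u * uS i v * w v := by
          refine Finset.sum_congr rfl fun v _ => ?_; rw [Finset.sum_mul]
      _ = ∑ i, ∑ v, uS i u * uS i v * w v :=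
          Finset.sum_comm (f := fun v i => uS i u * uS i v * w v)
      _ = ∑ i, (uS i ⬝ᵥ w) * uS i u := by
          refine Finset.sum_congr rfl fun i _ => ?_
          rw [dotProduct, Finset.sum_mul]
          exact Finset.sum_congr rfl fun v _ => by ring
  have hlamSnn : ∀ i, 0 ≤ lamS i := by
    intro i
    have h1 : uS i ⬝ᵥ NS.mulVec (uS i) = lamS i := by
      rw [heigS i, dotProduct_smul, horthS i i]
      simp
    rw [← h1, hQS]
    exact Finset.sum_nonneg fun e _ => sq_nonneg _
  have hgap : ∀ w : V → ℝ, w ⬝ᵥ uS ⟨0, h0lt⟩ = 0 →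
      lam2 * (w ⬝ᵥ w) ≤ w ⬝ᵥ NS.mulVec w := by
    intro w hw0
    have hNv : ∀ u, NS.mulVec w u = ∑ i, (uS i ⬝ᵥ w) * lamS i * uS i u := by
      intro u
      calc NS.mulVec w u = ∑ v, NS u v * w v := rfl
        _ = ∑ v, NS u v * ∑ i, (uS i ⬝ᵥ w) * uS i v := by
            refine Finset.sum_congr rfl fun v _ => ?_; rw [← hwrep w v]
        _ = ∑ v, ∑ i, (uS i ⬝ᵥ w) * (NS u v * uS i v) := by
            refine Finset.sum_congr rfl fun v _ => ?_
            rw [Finset.mul_sum]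
            exact Finset.sum_congr rfl fun i _ => by ring
        _ = ∑ i, ∑ v, (uS i ⬝ᵥ w) * (NS u v * uS i v) :=
            Finset.sum_comm (f := fun v i => (uS i ⬝ᵥ w) * (NS u v * uS i v))
        _ = ∑ i, (uS i ⬝ᵥ w) * lamS i * uS i u := by
            refine Finset.sum_congr rfl fun i _ => ?_
            rw [← Finset.mul_sum]
            have : ∑ v, NS u v * uS i v = NS.mulVec (uS i) u := rfl
            rw [this, heigS i]
            simp only [Pi.smul_apply, smul_eq_mul]
            ring
    have hformA : w ⬝ᵥ NS.mulVec w = ∑ i, lamS i * (uS i ⬝ᵥ w) ^ 2 := by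
      calc w ⬝ᵥ NS.mulVec w = ∑ u, w u * NS.mulVec w u := rfl
        _ = ∑ u, ∑ i, (uS i ⬝ᵥ w) * lamS i * (uS i u * w u) := by
            refine Finset.sum_congr rfl fun u _ => ?_
            rw [hNv u, Finset.mul_sum]
            exact Finset.sum_congr rfl fun i _ => by ring
        _ = ∑ i, ∑ u, (uS i ⬝ᵥ w) * lamS i * (uS i u * w u) :=
            Finset.sum_comm (f := fun u i => (uS i ⬝ᵥ w) * lamS i * (uS i u * w u))
        _ = ∑ i, lamS i * (uS i ⬝ᵥ w) ^ 2 := by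
            refine Finset.sum_congr rfl fun i _ => ?_
            rw [← Finset.mul_sum]
            have : ∑ u, uS i u * w u = uS i ⬝ᵥ w := rfl
            rw [this]; ring
    have hformB : w ⬝ᵥ w = ∑ i, (uS i ⬝ᵥ w) ^ 2 := by
      have step : ∑ i, (uS i ⬝ᵥ w) ^ 2 = w ⬝ᵥ w := by
        calc ∑ i, (uS i ⬝ᵥ w) ^ 2
            = ∑ i, ∑ u, (uS i ⬝ᵥ w) * uS i u * w u := by
              refine Finset.sum_congr rfl fun i _ => ?_
              have h2 : (uS i ⬝ᵥ w) * (uS i ⬝ᵥ w)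
                  = (uS i ⬝ᵥ w) * ∑ u, uS i u * w u := rfl
              rw [sq, h2, Finset.mul_sum]
              exact Finset.sum_congr rfl fun u _ => by ring
          _ = ∑ u, ∑ i, (uS i ⬝ᵥ w) * uS i u * w u :=
              Finset.sum_comm (f := fun i u => (uS i ⬝ᵥ w) * uS i u * w u)
          _ = ∑ u, w u * w u := by
              refine Finset.sum_congr rfl fun u _ => ?_
              rw [← Finset.sum_mul, ← hwrep w u]
          _ = w ⬝ᵥ w := rfl
      exact step.symm
    rw [hformA, hformB, Finset.mul_sum]
    refine Finset.sum_le_sum fun i _ => ?_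
    by_cases hi : i = (⟨0, h0lt⟩ : Fin (Fintype.card V))
    · have : uS i ⬝ᵥ w = 0 := by rw [hi, dotProduct_comm]; exact hw0
      simp [this]
    · have h1i : (⟨1, h1lt⟩ : Fin (Fintype.card V)) ≤ i := by
        have : (0 : ℕ) < i.val := Nat.pos_of_ne_zero fun h => hi (Fin.ext h)
        exact this
      have hge : lam2 ≤ lamS i := by
        rw [hlam2]; exact hmonoS h1i
      nlinarith [sq_nonneg (uS i ⬝ᵥ w)]
  -- statement 4 (upper bound)
  have hupper : ∀ x : V → ℝ, x ⬝ᵥ M.mulVec x ≤ 4 * (x ⬝ᵥ x) := by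
    intro z
    rw [hQ]
    have hstep1 : (∑ e, ((z (b e) / Real.sqrt (d (b e)))
          - η e * (z (a e) / Real.sqrt (d (a e)))) ^ 2)
        ≤ 2 * ∑ e, ((z (b e) / Real.sqrt (d (b e))) ^ 2
              + η e ^ 2 * (z (a e) / Real.sqrt (d (a e))) ^ 2) := by
      rw [Finset.mul_sum]
      refine Finset.sum_le_sum fun e _ => ?_
      nlinarith [sq_nonneg ((z (b e) / Real.sqrt (d (b e)))
        + η e * (z (a e) / Real.sqrt (d (a e))))]
    have hstep2 : ∑ e, ((z (b e) / Real.sqrt (d (b e))) ^ 2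
          + η e ^ 2 * (z (a e) / Real.sqrt (d (a e))) ^ 2)
        = ∑ v, LG v v * (z v / Real.sqrt (d v)) ^ 2 :=
      (hI2 fun v => z v / Real.sqrt (d v)).symm
    have hstep3 : ∑ v, LG v v * (z v / Real.sqrt (d v)) ^ 2 ≤ z ⬝ᵥ z := by
      have : ∀ v, LG v v * (z v / Real.sqrt (d v)) ^ 2 ≤ z v * z v := by
        intro v
        rw [div_pow, Real.sq_sqrt (hdpos v).le]
        have h1 : LG v v ≤ d v := (hd v).1
        have h2 : 0 ≤ z v ^ 2 / d v := div_nonneg (sq_nonneg _) (hdpos v).le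
        calc LG v v * (z v ^ 2 / d v) ≤ d v * (z v ^ 2 / d v) :=
              mul_le_mul_of_nonneg_right h1 h2
          _ = z v ^ 2 := mul_div_cancel₀ _ (hdpos v).ne'
          _ = z v * z v := sq (z v) ▸ by ring
      exact le_trans (Finset.sum_le_sum fun v _ => this v) (le_of_eq rfl)
    have hzz := hdnn z
    nlinarith
  -- symmetry facts
  have hLGsym : ∀ u v, LG u v = LG v u := by
    intro u v
    rw [hLG]
    simp only [Matrix.mul_apply, Matrix.transpose_apply]
    exact Finset.sum_congr rfl fun e _ => mul_comm _ _
  have hMsym : ∀ u v, M u v = M v u := by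
    intro u v
    rw [hM, hM, hLGsym u v, mul_comm (Real.sqrt (d u)) (Real.sqrt (d v))]
    by_cases h : u = v
    · simp [h]
    · simp [h, Ne.symm h]
  have hsymdot : ∀ x y : V → ℝ, x ⬝ᵥ M.mulVec y = y ⬝ᵥ M.mulVec x := by
    intro x y
    rw [dot_mulVec_eq, dot_mulVec_eq, Finset.sum_comm]
    exact Finset.sum_congr rfl fun v _ => Finset.sum_congr rfl fun u _ => by
      rw [hMsym u v]; ring
  -- statement 3 (lower bound on complement of vmin)
  have hlower : ∀ x : V → ℝ, x ⬝ᵥ vmin = 0 →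
      (lam2 / (2 * c)) * (x ⬝ᵥ x) ≤ x ⬝ᵥ M.mulVec x := by
    intro y hy
    by_contra hcon
    push_neg at hcon
    have hyy : 0 < y ⬝ᵥ y := by
      rcases (hdnn y).lt_or_eq with h | h
      · exact h
      · exfalso
        rw [← h, mul_zero] at hcon
        exact absurd hcon (not_lt.mpr (hMnn y))
    have hlam2pos : 0 < lam2 := by
      rcases hlam2nn.lt_or_eq with h | h
      · exact h
      · exfalso
        rw [← h] at hcon
        simp only [zero_div, zero_mul] at hcon
        exact absurd hcon (not_lt.mpr (hMnn y))
    set u0 : V → ℝ := uS ⟨0, h0lt⟩ with hu0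
    clear_value u0
    set ℓ : (V → ℝ) → ℝ :=
      fun z => ∑ v, Real.sqrt (LS v v) * (z v / Real.sqrt (d v)) * u0 v with hℓ
    clear_value ℓ
    have key : ∀ αc sc : ℝ, ¬(αc = 0 ∧ sc = 0) →
        ℓ (αc • vmin + sc • y) = 0 → False := by
      intro αc sc hne hz0
      set z : V → ℝ := αc • vmin + sc • y with hzdef
      clear_value z
      have hvy : vmin ⬝ᵥ y = 0 := by rw [dotProduct_comm]; exact hy
      have hzz : z ⬝ᵥ z = αc ^ 2 + sc ^ 2 * (y ⬝ᵥ y) := by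
        rw [hzdef]
        simp only [dotProduct_add, add_dotProduct, dotProduct_smul, smul_dotProduct,
          smul_eq_mul, hunit, hy, hvy]
        ring
      have hzzpos : 0 < z ⬝ᵥ z := by
        rw [hzz]; exact aux_pos _ _ _ hyy hne
      have hvMy : vmin ⬝ᵥ M.mulVec y = 0 := by
        rw [hsymdot vmin y, heigmin, dotProduct_smul, smul_eq_mul, hy, mul_zero]
      have hyMv : y ⬝ᵥ M.mulVec vmin = 0 := by
        rw [heigmin, dotProduct_smul, smul_eq_mul, hy, mul_zero]
      have hzM : z ⬝ᵥ M.mulVec z = αc ^ 2 * lam1 + sc ^ 2 * (y ⬝ᵥ M.mulVec y) := by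
        rw [hzdef]
        simp only [Matrix.mulVec_add, Matrix.mulVec_smul, dotProduct_add, add_dotProduct,
          dotProduct_smul, smul_dotProduct, smul_eq_mul, heigmin, hunit, hy, hvy,
          hvMy, hyMv]
        try simp only [dotProduct_smul, smul_eq_mul, hunit, hvy]
        ring
      -- strict upper bound on the Rayleigh quotient of z
      have hupperz : z ⬝ᵥ M.mulVec z < (lam2 / (2 * c)) * (z ⬝ᵥ z) := by
        rw [hzM, hzz]
        exact aux_upper _ _ _ _ _ _ hyy (hmin y) hcon hne
      -- lower bound on the Rayleigh quotient of z
      set xz : V → ℝ := fun v => z v / Real.sqrt (d v) with hxz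
      clear_value xz
      set w : V → ℝ := fun v => Real.sqrt (LS v v) * xz v with hwdef
      clear_value w
      have hw0 : w ⬝ᵥ u0 = 0 := by
        have hlz : ℓ z = w ⬝ᵥ u0 := by
          rw [hℓ]
          dsimp only
          refine Finset.sum_congr rfl fun v _ => ?_
          simp only [hwdef, hxz]
        calc w ⬝ᵥ u0 = ℓ z := hlz.symm
          _ = 0 := hz0
      have hwxz : ∀ v, w v / Real.sqrt (LS v v) = xz v := by
        intro v
        simp only [hwdef]
        exact mul_div_cancel_left₀ _ (hsS v)
      have hww : w ⬝ᵥ w = ∑ v, LS v v * xz v ^ 2 := by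
        refine Finset.sum_congr rfl fun v _ => ?_
        simp only [hwdef]
        nlinarith [Real.sq_sqrt (hdSpos v).le]
      have hT : ∑ e, (xz (b e) - xz (a e)) ^ 2 = w ⬝ᵥ NS.mulVec w := by
        rw [hQS w]
        exact Finset.sum_congr rfl fun e _ => by rw [hwxz, hwxz]
      set S : ℝ := ∑ v, LS v v * xz v ^ 2 with hSdef
      clear_value S
      have hSnn : 0 ≤ S := by
        rw [hSdef]
        exact Finset.sum_nonneg fun v _ => mul_nonneg (hdSpos v).le (sq_nonneg _)
      have hTS : lam2 * S ≤ ∑ e, (xz (b e) - xz (a e)) ^ 2 := by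
        rw [hT, ← hww]
        exact hgap w hw0
      have hUS : ∑ e, xz (a e) ^ 2 ≤ S := by
        rw [hSdef, hI1 xz]
        exact Finset.sum_le_sum fun e _ => by nlinarith [sq_nonneg (xz (b e))]
      -- per-edge bound
      have hedge : ∀ e, (3/4) * (xz (b e) - xz (a e)) ^ 2 - 3 * β ^ 2 * xz (a e) ^ 2
          ≤ (xz (b e) - η e * xz (a e)) ^ 2 := by
        intro e
        have h1 := (hη e).1
        have h2 := (hη e).2
        have hsb : (η e - 1) ^ 2 * xz (a e) ^ 2 ≤ β ^ 2 * xz (a e) ^ 2 := by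
          have hb : (η e - 1) ^ 2 ≤ β ^ 2 := by nlinarith
          exact mul_le_mul_of_nonneg_right hb (sq_nonneg _)
        nlinarith [sq_nonneg ((xz (b e) - xz (a e)) / 2 - 2 * (η e - 1) * xz (a e)), hsb]
      have hQz : ((3:ℝ)/4) * lam2 * S - 3 * β ^ 2 * S ≤ z ⬝ᵥ M.mulVec z := by
        have hsum : ∑ e, ((3/4) * (xz (b e) - xz (a e)) ^ 2 - 3 * β ^ 2 * xz (a e) ^ 2)
            ≤ ∑ e, (xz (b e) - η e * xz (a e)) ^ 2 :=
          Finset.sum_le_sum fun e _ => hedge e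
        have hsum2 : ∑ e, ((3/4) * (xz (b e) - xz (a e)) ^ 2 - 3 * β ^ 2 * xz (a e) ^ 2)
            = (3/4) * (∑ e, (xz (b e) - xz (a e)) ^ 2) - 3 * β ^ 2 * ∑ e, xz (a e) ^ 2 := by
          rw [Finset.sum_sub_distrib, Finset.mul_sum, Finset.mul_sum]
        have h3 : 3 * β ^ 2 * ∑ e, xz (a e) ^ 2 ≤ 3 * β ^ 2 * S :=
          mul_le_mul_of_nonneg_left hUS (by positivity)
        have hεz : 0 ≤ ε * (z ⬝ᵥ z) := mul_nonneg hε0 (hdnn z)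
        rw [hQ z]
        have : (∑ e, ((z (b e) / Real.sqrt (d (b e)))
            - η e * (z (a e) / Real.sqrt (d (a e)))) ^ 2)
            = ∑ e, (xz (b e) - η e * xz (a e)) ^ 2 := by simp only [hxz]
        rw [this]
        linarith [hTS, hsum, hsum2, h3, hεz]
      -- from S to z ⬝ᵥ z
      have hSz : z ⬝ᵥ z ≤ (c * (1 + β) ^ 2) * S := by
        rw [hSdef, Finset.mul_sum]
        refine Finset.sum_le_sum fun v _ => ?_
        have hx2 : xz v ^ 2 = z v ^ 2 / d v := by
          simp only [hxz]
          rw [div_pow, Real.sq_sqrt (hdpos v).le]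
        have h1 : d v ≤ c * (1 + β) ^ 2 * LS v v := by
          calc d v ≤ c * LG v v := (hd v).2
            _ ≤ c * ((1 + β) ^ 2 * LS v v) :=
              mul_le_mul_of_nonneg_left (hdiag2 v) hc0.le
            _ = c * (1 + β) ^ 2 * LS v v := by ring
        rw [hx2]
        rw [show c * (1 + β) ^ 2 * (LS v v * (z v ^ 2 / d v))
            = (c * (1 + β) ^ 2 * LS v v) * (z v ^ 2 / d v) by ring]
        calc z v * z v = d v * (z v ^ 2 / d v) := by
              rw [mul_div_cancel₀ _ (hdpos v).ne']; ring
          _ ≤ (c * (1 + β) ^ 2 * LS v v) * (z v ^ 2 / d v) :=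
              mul_le_mul_of_nonneg_right h1 (div_nonneg (sq_nonneg _) (hdpos v).le)
      -- numeric comparison
      have hnum : lam2 / (2 * c) * (c * (1 + β) ^ 2) ≤ (3:ℝ)/4 * lam2 - 3 * β ^ 2 := by
        have hq : lam2 / (2 * c) * (c * (1 + β) ^ 2) = lam2 * (1 + β) ^ 2 / 2 := by
          field_simp
        rw [hq]
        exact aux_num β lam2 hβ0 hβlam hlow hup hlam2nn
      have hlowerz : (lam2 / (2 * c)) * (z ⬝ᵥ z) ≤ z ⬝ᵥ M.mulVec z := by
        have ht0 : 0 ≤ lam2 / (2 * c) := by positivity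
        calc (lam2 / (2 * c)) * (z ⬝ᵥ z)
            ≤ (lam2 / (2 * c)) * ((c * (1 + β) ^ 2) * S) :=
              mul_le_mul_of_nonneg_left hSz ht0
          _ = (lam2 / (2 * c) * (c * (1 + β) ^ 2)) * S := by ring
          _ ≤ ((3:ℝ)/4 * lam2 - 3 * β ^ 2) * S :=
              mul_le_mul_of_nonneg_right hnum hSnn
          _ = (3:ℝ)/4 * lam2 * S - 3 * β ^ 2 * S := by ring
          _ ≤ z ⬝ᵥ M.mulVec z := hQz
      linarith
    -- linearity of ℓ
    have hlℓ : ∀ (p q : ℝ) (z1 z2 : V → ℝ),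
        ℓ (p • z1 + q • z2) = p * ℓ z1 + q * ℓ z2 := by
      intro p q z1 z2
      rw [hℓ]
      dsimp only
      rw [Finset.mul_sum, Finset.mul_sum, ← Finset.sum_add_distrib]
      refine Finset.sum_congr rfl fun v _ => ?_
      simp only [Pi.add_apply, Pi.smul_apply, smul_eq_mul, div_eq_mul_inv]
      ring
    by_cases h1 : ℓ vmin = 0
    · refine key 1 0 (by norm_num) ?_
      have : (1:ℝ) • vmin + (0:ℝ) • y = vmin := by simp
      rw [this, h1]
    · refine key (ℓ y) (-(ℓ vmin)) (by intro h; exact h1 (by simpa using h.2)) ?_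
      rw [show (-(ℓ vmin)) • y = (-(ℓ vmin)) • y from rfl, hlℓ]
      ring
  -- decomposition of a general vector
  have hdec : ∀ x : V → ℝ,
      (x - (x ⬝ᵥ vmin) • vmin) ⬝ᵥ vmin = 0 ∧
      x ⬝ᵥ x = (x ⬝ᵥ vmin) ^ 2 + ((x - (x ⬝ᵥ vmin) • vmin) ⬝ᵥ (x - (x ⬝ᵥ vmin) • vmin)) ∧
      x ⬝ᵥ M.mulVec x = lam1 * (x ⬝ᵥ vmin) ^ 2
        + ((x - (x ⬝ᵥ vmin) • vmin) ⬝ᵥ M.mulVec (x - (x ⬝ᵥ vmin) • vmin)) := by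
    intro x
    set α : ℝ := x ⬝ᵥ vmin with hα
    set y : V → ℝ := x - α • vmin with hy
    have hvx : vmin ⬝ᵥ x = α := by rw [dotProduct_comm]
    have hyv : y ⬝ᵥ vmin = 0 := by
      rw [hy]
      simp [sub_dotProduct, smul_dotProduct, smul_eq_mul, hunit, hα]
    refine ⟨hyv, ?_, ?_⟩
    · rw [hy]
      simp only [sub_dotProduct, dotProduct_sub, smul_dotProduct, dotProduct_smul,
        smul_eq_mul, hunit, hvx]
      rw [← hα]
      ring
    · have hvMx : vmin ⬝ᵥ M.mulVec x = lam1 * α := by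
        rw [hsymdot vmin x, heigmin, dotProduct_smul, smul_eq_mul, hα]
      have hxMv : x ⬝ᵥ M.mulVec vmin = lam1 * α := by
        rw [heigmin, dotProduct_smul, smul_eq_mul, hα]
      rw [hy]
      simp only [Matrix.mulVec_sub, Matrix.mulVec_smul, sub_dotProduct, dotProduct_sub,
        dotProduct_smul, smul_dotProduct, smul_eq_mul, heigmin, hunit, hvMx, hxMv]
      try simp only [dotProduct_smul, smul_eq_mul, hunit, hvx]
      ring
  -- quadratic form of the rank-one comparison matrix
  have hPq : ∀ x : V → ℝ,
      x ⬝ᵥ (((1 : Matrix V V ℝ) - (1 - lam1) • vecMulVec vmin vmin).mulVec x)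
        = (x ⬝ᵥ x) - (1 - lam1) * (x ⬝ᵥ vmin) ^ 2 := by
    intro x
    have hvv : (vecMulVec vmin vmin).mulVec x = (vmin ⬝ᵥ x) • vmin := by
      ext u
      simp only [Matrix.mulVec, vecMulVec_apply, dotProduct, Pi.smul_apply, smul_eq_mul]
      rw [Finset.sum_mul]
      exact Finset.sum_congr rfl fun v _ => by ring
    rw [Matrix.sub_mulVec, Matrix.one_mulVec, smul_mulVec, hvv, dotProduct_sub,
      dotProduct_smul, dotProduct_smul, smul_eq_mul, smul_eq_mul, dotProduct_comm vmin x]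
    ring
  -- symmetry of the rank-one comparison matrix
  have hPsym : ∀ u v, ((1 : Matrix V V ℝ) - (1 - lam1) • vecMulVec vmin vmin) u v
      = ((1 : Matrix V V ℝ) - (1 - lam1) • vecMulVec vmin vmin) v u := by
    intro u v
    simp only [Matrix.sub_apply, Matrix.smul_apply, Matrix.one_apply, vecMulVec_apply,
      smul_eq_mul]
    rw [mul_comm (vmin u) (vmin v)]
    congr 1
    by_cases h : u = v
    · simp [h]
    · simp [h, Ne.symm h]
  have htle : lam2 / (2 * c) ≤ 1 / 2 := by
    rw [div_le_iff₀ (by positivity)]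
    nlinarith
  have ht0' : 0 ≤ lam2 / (2 * c) := by positivity
  have hstar : ∀ x : V → ℝ, star x = x := fun x => funext fun v => star_trivial (x v)
  refine ⟨Matrix.posSemidef_iff_dotProduct_mulVec.mpr ⟨?_, ?_⟩,
    Matrix.posSemidef_iff_dotProduct_mulVec.mpr ⟨?_, ?_⟩, hlower, hupper⟩
  · exact real_isHermitian_of_symm _ fun u v => by
      simp only [Matrix.sub_apply, Matrix.smul_apply, Matrix.one_apply, vecMulVec_apply,
        smul_eq_mul]
      rw [hMsym u v, mul_comm (vmin u) (vmin v)]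
      by_cases h : u = v
      · simp [h]
      · simp [h, Ne.symm h]
  · intro x
    rw [hstar x]
    obtain ⟨h1, h2, h3⟩ := hdec x
    have hq : x ⬝ᵥ ((M - (lam2 / (2 * c)) •
        ((1 : Matrix V V ℝ) - (1 - lam1) • vecMulVec vmin vmin)).mulVec x)
        = x ⬝ᵥ M.mulVec x
          - (lam2 / (2 * c)) * ((x ⬝ᵥ x) - (1 - lam1) * (x ⬝ᵥ vmin) ^ 2) := by
      rw [Matrix.sub_mulVec, dotProduct_sub, smul_mulVec, dotProduct_smul,
        smul_eq_mul, hPq x]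
    rw [hq, h3, h2]
    exact aux_psd1 _ _ _ _ _ (hlower _ h1) hlam1nn ht0' htle (sq_nonneg _)
  · exact real_isHermitian_of_symm _ fun u v => by
      simp only [Matrix.sub_apply, Matrix.smul_apply, Matrix.one_apply, vecMulVec_apply,
        smul_eq_mul]
      rw [hMsym u v, mul_comm (vmin u) (vmin v)]
      by_cases h : u = v
      · simp [h]
      · simp [h, Ne.symm h]
  · intro x
    rw [hstar x]
    obtain ⟨h1, h2, h3⟩ := hdec x
    have hq : x ⬝ᵥ (((4 : ℝ) • ((1 : Matrix V V ℝ) - (1 - lam1) • vecMulVec vmin vmin)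
        - M).mulVec x)
        = 4 * ((x ⬝ᵥ x) - (1 - lam1) * (x ⬝ᵥ vmin) ^ 2) - x ⬝ᵥ M.mulVec x := by
      rw [Matrix.sub_mulVec, dotProduct_sub, smul_mulVec, dotProduct_smul,
        smul_eq_mul, hPq x]
    rw [hq, h3, h2]
    exact aux_psd2 _ _ _ _ (hupper (x - (x ⬝ᵥ vmin) • vmin)) hlam1nn (sq_nonneg _)
end
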